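/- arXiv:1602.02016 — 2 statements merged into one kernel-verified Lean document; each statement's English description precedes it below -/
import Mathlib

section
/- Assume Schanuel's Conjecture. Let a ∈ ℂ be transcendental over ℚ and suppose that the transcendence degree of ℚ(a, e^a, e^{e^a}) over ℚ equals 1. Then there exists a rational number r such that e^a = r·a. -/
/-- **Schanuel's Conjecture**: if `λ₁,…,λₙ ∈ ℂ` are `ℚ`-linearly independent,
then the set `{λ₁,…,λₙ,e^{λ₁},…,e^{λₙ}}` contains `n` algebraically
independent elements (transcendence degree at least `n`). -/
def SchanuelConjecture : Prop :=
  ∀ (n : ℕ) (l : Fin n → ℂ), LinearIndependent ℚ l →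
    ∃ f : Fin n → ℂ,
      (∀ i, f i ∈ Set.range l ∪ Set.range (fun i => Complex.exp (l i))) ∧
      AlgebraicIndependent ℚ f

/-- `HasTrdeg S d` says that the transcendence degree over `ℚ` of the field
generated by the set `S ⊆ ℂ` equals `d`: `S` contains `d` algebraically
independent elements, and no more. -/
def HasTrdeg (S : Set ℂ) (d : ℕ) : Prop :=
  (∃ f : Fin d → ℂ, (∀ i, f i ∈ S) ∧ AlgebraicIndependent ℚ f) ∧
    ∀ (e : ℕ) (g : Fin e → ℂ), (∀ i, g i ∈ S) → AlgebraicIndependent ℚ g → e ≤ d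

/-- (SC) If `a` is transcendental and `td_ℚ(a, e^a, e^{e^a}) = 1`, then
`e^a = r·a` for some rational `r`. -/
theorem exp_eq_rat_mul_of_trdeg_one
    (hSC : SchanuelConjecture) (a : ℂ) (ha : Transcendental ℚ a)
    (htd : HasTrdeg ({a, Complex.exp a, Complex.exp (Complex.exp a)} : Set ℂ) 1) :
    ∃ r : ℚ, Complex.exp a = (r : ℂ) * a := by
  by_contra h
  push_neg at h
  have ha0 : a ≠ 0 := by
    intro h0
    exact ha (h0 ▸ isAlgebraic_zero)
  have hli : LinearIndependent ℚ ![a, Complex.exp a] := by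
    rw [LinearIndependent.pair_iff]
    intro s t hst
    by_cases ht : t = 0
    · subst ht
      simp only [zero_smul, add_zero] at hst
      have hs : s = 0 := by
        by_contra hs
        exact ha0 (by
          have := hst
          rw [smul_eq_zero] at this
          rcases this with h1 | h2
          · exact absurd h1 (by exact_mod_cast hs)
          · exact h2)
      exact ⟨hs, rfl⟩
    · exfalso
      apply h (-s / t)
      have hst' : (t : ℂ) * Complex.exp a = -(s : ℂ) * a := by
        have : (s : ℂ) * a + (t : ℂ) * Complex.exp a = 0 := by
          simpa [Rat.smul_def] using hst
        linear_combination this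
      have htC : (t : ℂ) ≠ 0 := by exact_mod_cast ht
      push_cast
      field_simp
      linear_combination hst'
  obtain ⟨f, hf, hfind⟩ := hSC 2 ![a, Complex.exp a] hli
  have : (2 : ℕ) ≤ 1 := by
    apply htd.2 2 f _ hfind
    intro i
    rcases hf i with ⟨j, hj⟩ | ⟨j, hj⟩ <;> fin_cases j <;>
      simp_all [Set.mem_insert_iff]
  omega
end

section
/- Let f : ℂⁿ → ℂⁿ be given by f(x) = (e^{x₁} − P₁(x), …, e^{xₙ} − Pₙ(x)) where P₁,…,Pₙ ∈ ℂ[x₁,…,xₙ] are nonzero polynomials. Then f has a zero in ℂⁿ, i.e., the system e^{z₁} = P₁(z), …, e^{zₙ} = Pₙ(z) has a solution z ∈ ℂⁿ. -/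
open MvPolynomial

open Finset


lemma prod_sub_prod_norm_le {ι : Type*} (s : Finset ι) (f g : ι → ℂ) (M : ℝ)
    (hM : 1 ≤ M) (hf : ∀ i ∈ s, ‖f i‖ ≤ M) (hg : ∀ i ∈ s, ‖g i‖ ≤ M) :
    ‖∏ i ∈ s, f i - ∏ i ∈ s, g i‖ ≤ (∑ i ∈ s, ‖f i - g i‖) * M ^ (s.card - 1) := by
  induction s using Finset.cons_induction with
  | empty => simp
  | cons a t hat ih =>
    have hfa : ‖f a‖ ≤ M := hf a (mem_cons_self a t)
    have h1 : ‖∏ i ∈ t, g i‖ ≤ M ^ t.card := by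
      rw [norm_prod]
      calc ∏ i ∈ t, ‖g i‖ ≤ ∏ i ∈ t, M :=
            Finset.prod_le_prod (fun i _ => norm_nonneg _)
              (fun i hi => hg i (mem_cons_of_mem hi))
        _ = M ^ t.card := by rw [prod_const]
    have key : ‖∏ i ∈ cons a t hat, f i - ∏ i ∈ cons a t hat, g i‖ ≤
        ‖f a‖ * ‖∏ i ∈ t, f i - ∏ i ∈ t, g i‖ + ‖f a - g a‖ * ‖∏ i ∈ t, g i‖ := by
      rw [prod_cons, prod_cons]
      calc ‖f a * ∏ i ∈ t, f i - g a * ∏ i ∈ t, g i‖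
          = ‖f a * (∏ i ∈ t, f i - ∏ i ∈ t, g i) + (f a - g a) * ∏ i ∈ t, g i‖ := by
            ring_nf
        _ ≤ ‖f a * (∏ i ∈ t, f i - ∏ i ∈ t, g i)‖ + ‖(f a - g a) * ∏ i ∈ t, g i‖ :=
            norm_add_le _ _
        _ = ‖f a‖ * ‖∏ i ∈ t, f i - ∏ i ∈ t, g i‖ + ‖f a - g a‖ * ‖∏ i ∈ t, g i‖ := by
            rw [norm_mul, norm_mul]
    have ih' := ih (fun i hi => hf i (mem_cons_of_mem hi)) (fun i hi => hg i (mem_cons_of_mem hi))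
    rw [card_cons, sum_cons]
    have hc : t.card + 1 - 1 = t.card := by omega
    rw [hc]
    rcases t.eq_empty_or_nonempty with rfl | ht
    · simp [prod_cons]
    · have hcard : 1 ≤ t.card := Finset.Nonempty.card_pos ht
      have h2 : M * M ^ (t.card - 1) = M ^ t.card := by
        rw [← pow_succ']
        congr 1
        omega
      calc ‖∏ i ∈ cons a t hat, f i - ∏ i ∈ cons a t hat, g i‖
          ≤ ‖f a‖ * ‖∏ i ∈ t, f i - ∏ i ∈ t, g i‖ + ‖f a - g a‖ * ‖∏ i ∈ t, g i‖ := key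
        _ ≤ M * ((∑ i ∈ t, ‖f i - g i‖) * M ^ (t.card - 1)) + ‖f a - g a‖ * M ^ t.card := by
            gcongr
        _ = (∑ i ∈ t, ‖f i - g i‖) * (M * M ^ (t.card - 1)) + ‖f a - g a‖ * M ^ t.card := by ring
        _ = (‖f a - g a‖ + ∑ i ∈ t, ‖f i - g i‖) * M ^ t.card := by rw [h2]; ring


lemma monomial_prod_eq {n : ℕ} (a : Fin n →₀ ℕ) (z : Fin n → ℂ) :
    ∏ p ∈ a.support.sigma (fun i => Finset.range (a i)), z p.1
      = ∏ i ∈ a.support, z i ^ a i := by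
  rw [Finset.prod_sigma]
  simp [Finset.prod_const]

lemma sigma_card {n : ℕ} (a : Fin n →₀ ℕ) :
    (a.support.sigma (fun i => Finset.range (a i))).card = a.sum fun _ e => e := by
  rw [Finset.card_sigma]
  simp [Finsupp.sum]

lemma monomial_diff {n : ℕ} (a : Fin n →₀ ℕ) (z w : Fin n → ℂ) (M : ℝ) (hM : 1 ≤ M)
    (hz : ∀ i, ‖z i‖ ≤ M) (hw : ∀ i, ‖w i‖ ≤ M) (D : ℕ) (hD : (a.sum fun _ e => e) ≤ D) :
    ‖∏ i ∈ a.support, z i ^ a i - ∏ i ∈ a.support, w i ^ a i‖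
      ≤ (a.sum fun _ e => e : ℕ) * M ^ (D - 1) * ‖z - w‖ := by
  have h1 := prod_sub_prod_norm_le (a.support.sigma (fun i => Finset.range (a i)))
    (fun p => z p.1) (fun p => w p.1) M hM (fun p _ => hz p.1) (fun p _ => hw p.1)
  rw [monomial_prod_eq, monomial_prod_eq, sigma_card] at h1
  refine h1.trans ?_
  have h2 : ∑ p ∈ a.support.sigma (fun i => Finset.range (a i)), ‖z p.1 - w p.1‖
      ≤ (a.sum fun _ e => e : ℕ) * ‖z - w‖ := by
    calc ∑ p ∈ a.support.sigma (fun i => Finset.range (a i)), ‖z p.1 - w p.1‖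
        ≤ ∑ p ∈ a.support.sigma (fun i => Finset.range (a i)), ‖z - w‖ := by
          refine Finset.sum_le_sum fun p _ => ?_
          have := norm_le_pi_norm (z - w) p.1
          simpa using this
      _ = (a.sum fun _ e => e : ℕ) * ‖z - w‖ := by
          rw [Finset.sum_const, ← sigma_card a]; simp [nsmul_eq_mul]
  have h3 : M ^ ((a.sum fun _ e => e) - 1) ≤ M ^ (D - 1) :=
    pow_le_pow_right₀ hM (by omega)
  calc (∑ p ∈ a.support.sigma (fun i => Finset.range (a i)), ‖z p.1 - w p.1‖)
        * M ^ ((a.sum fun _ e => e) - 1)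
      ≤ ((a.sum fun _ e => e : ℕ) * ‖z - w‖) * M ^ (D - 1) := by
        apply mul_le_mul h2 h3 (by positivity)
        positivity
    _ = (a.sum fun _ e => e : ℕ) * M ^ (D - 1) * ‖z - w‖ := by ring
lemma eval_diff_bound {n : ℕ} (P : MvPolynomial (Fin n) ℂ) :
    ∃ C : ℝ, 0 ≤ C ∧ (P.totalDegree = 0 → C = 0) ∧
      ∀ (z w : Fin n → ℂ) (M : ℝ), 1 ≤ M → (∀ i, ‖z i‖ ≤ M) → (∀ i, ‖w i‖ ≤ M) →
        ‖eval z P - eval w P‖ ≤ C * M ^ (P.totalDegree - 1) * ‖z - w‖ := by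
  refine ⟨∑ a ∈ P.support, ‖coeff a P‖ * (a.sum fun _ e => e : ℕ), ?_, ?_, ?_⟩
  · exact Finset.sum_nonneg fun a _ => by positivity
  · intro h0
    refine Finset.sum_eq_zero fun a ha => ?_
    have : (a.sum fun _ e => e) = 0 := by
      have := MvPolynomial.le_totalDegree ha
      omega
    simp [this]
  · intro z w M hM hz hw
    rw [eval_eq, eval_eq]
    rw [← Finset.sum_sub_distrib]
    calc ‖∑ a ∈ P.support, (coeff a P * ∏ i ∈ a.support, z i ^ a i
            - coeff a P * ∏ i ∈ a.support, w i ^ a i)‖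
        ≤ ∑ a ∈ P.support, ‖coeff a P * ∏ i ∈ a.support, z i ^ a i
            - coeff a P * ∏ i ∈ a.support, w i ^ a i‖ := norm_sum_le _ _
      _ ≤ ∑ a ∈ P.support, ‖coeff a P‖ * ((a.sum fun _ e => e : ℕ)
            * M ^ (P.totalDegree - 1) * ‖z - w‖) := by
          refine Finset.sum_le_sum fun a ha => ?_
          rw [← mul_sub, norm_mul]
          exact mul_le_mul_of_nonneg_left
            (monomial_diff a z w M hM hz hw P.totalDegree (MvPolynomial.le_totalDegree ha))
            (norm_nonneg _)
      _ = (∑ a ∈ P.support, ‖coeff a P‖ * (a.sum fun _ e => e : ℕ))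
            * M ^ (P.totalDegree - 1) * ‖z - w‖ := by
          rw [Finset.sum_mul, Finset.sum_mul]
          refine Finset.sum_congr rfl fun a _ => by ring

lemma eval_growth_bound {n : ℕ} (P : MvPolynomial (Fin n) ℂ) :
    ∃ C : ℝ, 0 ≤ C ∧
      ∀ (z : Fin n → ℂ) (M : ℝ), 1 ≤ M → (∀ i, ‖z i‖ ≤ M) →
        ‖eval z P‖ ≤ C * M ^ P.totalDegree := by
  refine ⟨∑ a ∈ P.support, ‖coeff a P‖, Finset.sum_nonneg fun a _ => norm_nonneg _, ?_⟩
  intro z M hM hz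
  rw [eval_eq]
  calc ‖∑ a ∈ P.support, coeff a P * ∏ i ∈ a.support, z i ^ a i‖
      ≤ ∑ a ∈ P.support, ‖coeff a P * ∏ i ∈ a.support, z i ^ a i‖ := norm_sum_le _ _
    _ ≤ ∑ a ∈ P.support, ‖coeff a P‖ * M ^ P.totalDegree := by
        refine Finset.sum_le_sum fun a ha => ?_
        rw [norm_mul]
        refine mul_le_mul_of_nonneg_left ?_ (norm_nonneg _)
        calc ‖∏ i ∈ a.support, z i ^ a i‖ = ∏ i ∈ a.support, ‖z i‖ ^ a i := by
              rw [norm_prod]; simp [norm_pow]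
          _ ≤ ∏ i ∈ a.support, M ^ a i :=
              Finset.prod_le_prod (fun i _ => by positivity)
                (fun i _ => pow_le_pow_left₀ (norm_nonneg _) (hz i) _)
          _ = M ^ (a.sum fun _ e => e) := by
              rw [Finset.prod_pow_eq_pow_sum]; rfl
          _ ≤ M ^ P.totalDegree := pow_le_pow_right₀ hM (MvPolynomial.le_totalDegree ha)
    _ = (∑ a ∈ P.support, ‖coeff a P‖) * M ^ P.totalDegree := by rw [Finset.sum_mul]
lemma exists_int_point_ne_zero : ∀ {n : ℕ} (Q : MvPolynomial (Fin n) ℂ), Q ≠ 0 →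
    ∃ u : Fin n → ℤ, eval (fun i => (u i : ℂ)) Q ≠ 0 := by
  intro n
  induction n with
  | zero =>
    intro Q hQ
    refine ⟨fun i => 0, fun h => hQ ?_⟩
    rw [MvPolynomial.eq_C_of_isEmpty Q] at h ⊢
    rw [MvPolynomial.eval_C] at h
    rw [h, map_zero]
  | succ n ih =>
    intro Q hQ
    by_contra hcon
    push_neg at hcon
    apply hQ
    have hq : ∀ v : Fin n → ℤ, ∀ i : ℕ,
        eval (fun j => ((v j : ℤ) : ℂ)) ((finSuccEquiv ℂ n Q).coeff i) = 0 := by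
      intro v i
      have hpoly : (Polynomial.map (eval (fun j => ((v j : ℤ) : ℂ))) (finSuccEquiv ℂ n Q)) = 0 := by
        apply Polynomial.eq_zero_of_infinite_isRoot
        apply Set.Infinite.mono (s := Set.range (fun k : ℤ => (k : ℂ)))
        · rintro - ⟨k, rfl⟩
          have this : eval (Fin.cons ((k : ℂ)) (fun j => ((v j : ℤ) : ℂ))) Q = 0 := by
            have h1 := hcon (Fin.cons k v)
            convert h1 using 3
            funext i
            induction i using Fin.cases <;> simp
          rw [MvPolynomial.eval_eq_eval_mv_eval'] at this
          simpa [Polynomial.IsRoot] using this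
        · exact Set.infinite_range_of_injective (fun a b h => by exact_mod_cast h)
      have := congrArg (fun p => Polynomial.coeff p i) hpoly
      simpa using this
    have : ∀ i : ℕ, (finSuccEquiv ℂ n Q).coeff i = 0 := by
      intro i
      by_contra hne
      obtain ⟨v, hv⟩ := ih _ hne
      exact hv (hq v i)
    have hzero : finSuccEquiv ℂ n Q = 0 := Polynomial.ext fun i => by simp [this i]
    have := congrArg (finSuccEquiv ℂ n).symm hzero
    simpa using this
lemma homog_eval_smul {n d : ℕ} (φ : MvPolynomial (Fin n) ℂ) (hφ : φ.IsHomogeneous d)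
    (c : ℂ) (x : Fin n → ℂ) : eval (fun i => c * x i) φ = c ^ d * eval x φ := by
  rw [eval_eq, eval_eq, Finset.mul_sum]
  refine Finset.sum_congr rfl fun a ha => ?_
  have hdeg : (∑ i ∈ a.support, a i) = d := by
    have h1 := hφ (MvPolynomial.mem_support_iff.1 ha)
    simpa [Finsupp.weight, Finsupp.sum, Finsupp.linearCombination] using h1
  calc coeff a φ * ∏ i ∈ a.support, (c * x i) ^ a i
      = coeff a φ * ∏ i ∈ a.support, (c ^ a i * x i ^ a i) := by
        congr 1; exact Finset.prod_congr rfl fun i _ => mul_pow _ _ _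
    _ = coeff a φ * ((∏ i ∈ a.support, c ^ a i) * ∏ i ∈ a.support, x i ^ a i) := by
        rw [Finset.prod_mul_distrib]
    _ = c ^ d * (coeff a φ * ∏ i ∈ a.support, x i ^ a i) := by
        rw [Finset.prod_pow_eq_pow_sum, hdeg]; ring

lemma top_component_ne_zero {n : ℕ} (P : MvPolynomial (Fin n) ℂ) (hP : P ≠ 0) :
    homogeneousComponent P.totalDegree P ≠ 0 := by
  obtain ⟨a, ha, hdeg⟩ : ∃ a ∈ P.support, (a.sum fun _ e => e) = P.totalDegree := by
    have hne : P.support.Nonempty := by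
      rw [Finset.nonempty_iff_ne_empty]
      intro h
      exact hP (MvPolynomial.support_eq_empty.1 h)
    obtain ⟨a, ha, h⟩ := Finset.exists_mem_eq_sup P.support hne (fun a => a.sum fun _ e => e)
    exact ⟨a, ha, h.symm⟩
  intro h
  have := congrArg (coeff a) h
  rw [MvPolynomial.coeff_homogeneousComponent] at this
  have hd : a.degree = P.totalDegree := by
    rw [Finsupp.degree]
    rw [← hdeg]
    rfl
  rw [if_pos hd, MvPolynomial.coeff_zero] at this
  exact MvPolynomial.mem_support_iff.1 ha this
lemma exp_approx {x y : ℂ} (hx : ‖x‖ ≤ 1/8) (hy : ‖y‖ ≤ 1/8) :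
    ‖Complex.exp x - Complex.exp y - (x - y)‖ ≤ (1/4) * ‖x - y‖ := by
  have key := Convex.norm_image_sub_le_of_norm_hasDerivWithin_le
    (f := fun t => Complex.exp t - t) (f' := fun t => Complex.exp t - 1)
    (C := 1/4) (s := Metric.closedBall (0:ℂ) (1/8))
    (fun t ht => ((Complex.hasDerivAt_exp t).sub (hasDerivAt_id t)).hasDerivWithinAt)
    (fun t ht => by
      have h1 : ‖t‖ ≤ 1/8 := by
        simpa [Complex.dist_eq] using Metric.mem_closedBall.1 ht
      have h2 := Complex.norm_exp_sub_one_le (x := t) (by linarith)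
      calc ‖Complex.exp t - 1‖ ≤ 2 * ‖t‖ := h2
        _ ≤ 1/4 := by linarith)
    (convex_closedBall _ _)
    (by simpa [Complex.dist_eq] using hy) (by simpa [Complex.dist_eq] using hx)
  calc ‖Complex.exp x - Complex.exp y - (x - y)‖
      = ‖(Complex.exp x - x) - (Complex.exp y - y)‖ := by ring_nf
    _ ≤ (1/4) * ‖x - y‖ := key

set_option maxHeartbeats 1600000 in
open Filter Metric Topology NNReal in
/-- **Masser's theorem.** For nonzero polynomials `P₁,…,Pₙ ∈ ℂ[x₁,…,xₙ]`,
the system `e^{z₁} = P₁(z), …, e^{zₙ} = Pₙ(z)` has a solution `z ∈ ℂⁿ`;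
equivalently, `x ↦ (e^{x₁} − P₁(x), …, e^{xₙ} − Pₙ(x))` has a zero. -/
theorem masser_system_has_solution
    {n : ℕ} (P : Fin n → MvPolynomial (Fin n) ℂ) (hP : ∀ i, P i ≠ 0) :
    ∃ z : Fin n → ℂ, ∀ i, Complex.exp (z i) = MvPolynomial.eval z (P i) := by
  rcases Nat.eq_zero_or_pos n with rfl | hn
  · exact ⟨fun i => 0, fun i => i.elim0⟩
  haveI : Nonempty (Fin n) := ⟨⟨0, hn⟩⟩
  -- degrees and top homogeneous components
  set d : Fin n → ℕ := fun j => (P j).totalDegree with hd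
  set H : Fin n → MvPolynomial (Fin n) ℂ := fun j => homogeneousComponent (d j) (P j) with hHdef
  -- integer direction where all top components are nonzero
  obtain ⟨u, hu⟩ : ∃ u : Fin n → ℤ, ∀ j, eval (fun i => ((u i : ℤ) : ℂ)) (H j) ≠ 0 := by
    obtain ⟨u, hu⟩ := exists_int_point_ne_zero (∏ j, H j)
      (Finset.prod_ne_zero_iff.2 fun j _ => top_component_ne_zero (P j) (hP j))
    refine ⟨u, fun j => ?_⟩
    rw [map_prod] at hu
    exact Finset.prod_ne_zero_iff.1 hu j (Finset.mem_univ j)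
  set u' : Fin n → ℂ := fun i => ((u i : ℤ) : ℂ) with hu'
  set q : ℕ → Fin n → ℂ := fun m i => (2 * (Real.pi : ℂ) * Complex.I * m) * u' i with hq
  set a : Fin n → ℕ → ℂ := fun j m => eval (q m) (P j) with ha
  set cc : Fin n → ℂ := fun j => (2 * (Real.pi : ℂ) * Complex.I) ^ (d j) * eval u' (H j)
    with hccdef
  have h2pi : (2 * (Real.pi : ℂ) * Complex.I) ≠ 0 := by
    simp [Complex.I_ne_zero, Real.pi_ne_zero, Complex.ofReal_ne_zero]
  have hcc : ∀ j, cc j ≠ 0 := fun j => mul_ne_zero (pow_ne_zero _ h2pi) (hu j)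
  -- homogeneous expansion of a j m
  have hexp : ∀ j m, a j m = ∑ e ∈ Finset.range (d j + 1),
      (2 * (Real.pi : ℂ) * Complex.I * m) ^ e * eval u' (homogeneousComponent e (P j)) := by
    intro j m
    have h1 : a j m = eval (q m) (P j) := rfl
    rw [h1]
    conv_lhs => rw [← MvPolynomial.sum_homogeneousComponent (P j)]
    rw [map_sum]
    refine Finset.sum_congr rfl fun e he => ?_
    exact homog_eval_smul _ (homogeneousComponent_isHomogeneous e (P j))
      (2 * (Real.pi : ℂ) * Complex.I * m) u'
  -- limit of a j m / m ^ d j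
  have hinv0 : Tendsto (fun m : ℕ => ((m : ℂ))⁻¹) atTop (nhds 0) := by
    have h1 : Tendsto (fun m : ℕ => ((m : ℝ))⁻¹) atTop (nhds 0) :=
      tendsto_inv_atTop_zero.comp tendsto_natCast_atTop_atTop
    have h2 := (Complex.continuous_ofReal.tendsto 0).comp h1
    refine h2.congr fun m => ?_
    simp
  have hlim1 : ∀ j, Tendsto (fun m : ℕ => a j m / (m : ℂ) ^ (d j)) atTop (nhds (cc j)) := by
    intro j
    have hterm : ∀ e ∈ Finset.range (d j + 1), Tendsto
        (fun m : ℕ => (2 * (Real.pi : ℂ) * Complex.I) ^ e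
          * eval u' (homogeneousComponent e (P j)) * ((m : ℂ)⁻¹) ^ (d j - e)) atTop
        (nhds (if e = d j then cc j else 0)) := by
      intro e he
      rcases eq_or_ne e (d j) with rfl | hne
      · simp only [Nat.sub_self, pow_zero, mul_one, if_pos rfl]
        exact tendsto_const_nhds
      · have hpow0 : Tendsto (fun m : ℕ => ((m : ℂ)⁻¹) ^ (d j - e)) atTop (nhds 0) := by
          have hlt : e < d j := by rw [Finset.mem_range] at he; omega
          have h2 := hinv0.pow (d j - e)
          rwa [zero_pow (by omega : d j - e ≠ 0)] at h2
        have h3 := hpow0.const_mul ((2 * (Real.pi : ℂ) * Complex.I) ^ e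
          * eval u' (homogeneousComponent e (P j)))
        rw [mul_zero] at h3
        rw [if_neg hne]
        exact h3
    have hsum := tendsto_finset_sum (Finset.range (d j + 1)) hterm
    rw [Finset.sum_ite_eq' (Finset.range (d j + 1)) (d j)
      (fun _ => cc j), if_pos (Finset.self_mem_range_succ (d j))] at hsum
    refine hsum.congr' ?_
    filter_upwards [eventually_ge_atTop 1] with m hm
    have hm0 : (m : ℂ) ≠ 0 := Nat.cast_ne_zero.2 (by omega)
    rw [hexp j m, Finset.sum_div]
    refine (Finset.sum_congr rfl fun e he => ?_)
    rw [Finset.mem_range] at he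
    have hsplit : (m : ℂ) ^ (d j) = (m : ℂ) ^ e * (m : ℂ) ^ (d j - e) := by
      rw [← pow_add]; congr 1; omega
    rw [hsplit, mul_pow, inv_pow]
    field_simp
    ring
  have hlimn : ∀ j, Tendsto (fun m : ℕ => ‖a j m‖ / (m : ℝ) ^ (d j)) atTop (nhds ‖cc j‖) := by
    intro j
    have := (hlim1 j).norm
    simpa only [norm_div, norm_pow, Complex.norm_natCast] using this
  have hlow : ∀ j, ∀ᶠ m : ℕ in atTop, (‖cc j‖ / 2) * (m : ℝ) ^ (d j) ≤ ‖a j m‖ := by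
    intro j
    filter_upwards [(hlimn j).eventually
        (eventually_gt_nhds (half_lt_self (norm_pos_iff.2 (hcc j)))),
      eventually_ge_atTop 1] with m h1 h2
    have hm : (0:ℝ) < (m : ℝ) ^ (d j) := pow_pos (by exact_mod_cast h2) _
    calc (‖cc j‖ / 2) * (m : ℝ) ^ (d j)
        ≤ (‖a j m‖ / (m : ℝ) ^ (d j)) * (m : ℝ) ^ (d j) :=
          mul_le_mul_of_nonneg_right h1.le hm.le
      _ = ‖a j m‖ := div_mul_cancel₀ _ (ne_of_gt hm)
  have hccpos : ∀ j, (0:ℝ) < ‖cc j‖ / 2 := fun j => half_pos (norm_pos_iff.2 (hcc j))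
  have hane : ∀ᶠ m : ℕ in atTop, ∀ j, 0 < ‖a j m‖ := by
    rw [Filter.eventually_all]
    intro j
    filter_upwards [hlow j, eventually_ge_atTop 1] with m h1 h2
    have hm : (0:ℝ) < (m : ℝ) ^ (d j) := pow_pos (by exact_mod_cast h2) _
    exact lt_of_lt_of_le (mul_pos (hccpos j) hm) h1
  -- logarithms
  set s : ℕ → Fin n → ℂ := fun m j => Complex.log (a j m) with hs
  set σ : ℕ → ℝ := fun m => ∑ j, ‖s m j‖ with hσdef
  have hσ0 : ∀ m, 0 ≤ σ m := fun m => Finset.sum_nonneg fun j _ => norm_nonneg _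
  have hlogbound : ∀ z : ℂ, ‖Complex.log z‖ ≤ |Real.log ‖z‖| + Real.pi := by
    intro z
    calc ‖Complex.log z‖ ≤ |(Complex.log z).re| + |(Complex.log z).im| :=
          Complex.norm_le_abs_re_add_abs_im _
      _ ≤ |Real.log ‖z‖| + Real.pi := by
          rw [Complex.log_re, Complex.log_im]
          exact add_le_add le_rfl (Complex.abs_arg_le_pi z)
  have hσ : Tendsto (fun m : ℕ => σ m / (m : ℝ)) atTop (nhds 0) := by
    have hσj : ∀ j : Fin n, Tendsto (fun m : ℕ => ‖s m j‖ / (m : ℝ)) atTop (nhds 0) := by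
      intro j
      have hT1 : Tendsto (fun m : ℕ => Real.log (‖a j m‖ / (m : ℝ) ^ (d j)) / (m : ℝ))
          atTop (nhds 0) := by
        have hcont : Tendsto (fun m : ℕ => Real.log (‖a j m‖ / (m : ℝ) ^ (d j))) atTop
            (nhds (Real.log ‖cc j‖)) :=
          ((Real.continuousAt_log (norm_ne_zero_iff.2 (hcc j))).tendsto).comp (hlimn j)
        exact hcont.div_atTop tendsto_natCast_atTop_atTop
      have hT2 : Tendsto (fun m : ℕ => Real.log (m : ℝ) / (m : ℝ)) atTop (nhds 0) := by
        have h1 := Real.isLittleO_log_id_atTop.tendsto_div_nhds_zero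
        exact h1.comp tendsto_natCast_atTop_atTop
      have hT3 : Tendsto (fun m : ℕ => Real.log ‖a j m‖ / (m : ℝ)) atTop (nhds 0) := by
        have hcomb := hT1.add (hT2.const_mul ((d j : ℝ)))
        simp only [mul_zero, add_zero] at hcomb
        refine hcomb.congr' ?_
        filter_upwards [hlow j, eventually_ge_atTop 1] with m h1 h2
        have hm0 : (0:ℝ) < (m:ℝ) := by exact_mod_cast h2
        have hpow : (0:ℝ) < (m : ℝ) ^ (d j) := pow_pos hm0 _
        have hap : 0 < ‖a j m‖ := lt_of_lt_of_le (mul_pos (hccpos j) hpow) h1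
        have hlog : Real.log ‖a j m‖
            = Real.log (‖a j m‖ / (m:ℝ) ^ (d j)) + (d j : ℝ) * Real.log (m:ℝ) := by
          rw [Real.log_div (ne_of_gt hap) (ne_of_gt hpow), Real.log_pow]
          push_cast
          ring
        rw [hlog]
        ring
      have habs : Tendsto (fun m : ℕ => |Real.log ‖a j m‖| / (m : ℝ)) atTop (nhds 0) := by
        have h1 := hT3.abs
        rw [abs_zero] at h1
        refine h1.congr fun m => ?_
        rw [abs_div, abs_of_nonneg (Nat.cast_nonneg m : (0:ℝ) ≤ (m:ℝ))]
      have hrhs : Tendsto (fun m : ℕ => |Real.log ‖a j m‖| / (m : ℝ) + Real.pi / (m : ℝ))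
          atTop (nhds 0) := by
        have := habs.add (tendsto_const_div_atTop_nhds_zero_nat Real.pi)
        rwa [add_zero] at this
      refine squeeze_zero' (Filter.Eventually.of_forall fun m =>
        div_nonneg (norm_nonneg _) (Nat.cast_nonneg m)) ?_ hrhs
      filter_upwards [eventually_ge_atTop 1] with m hm
      have hm0 : (0:ℝ) < (m:ℝ) := by exact_mod_cast hm
      rw [← add_div]
      have h1 : ‖s m j‖ ≤ |Real.log ‖a j m‖| + Real.pi := hlogbound (a j m)
      exact div_le_div_of_nonneg_right h1 hm0.le
    have hsum := tendsto_finset_sum Finset.univ (fun j (_ : j ∈ Finset.univ) => hσj j)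
    rw [Finset.sum_const_zero] at hsum
    refine hsum.congr fun m => ?_
    rw [← Finset.sum_div]
  -- geometric constants
  set B : ℝ := 1 + ∑ i, ‖u' i‖ with hB
  have hB1 : 1 ≤ B := le_add_of_nonneg_right (Finset.sum_nonneg fun i _ => norm_nonneg _)
  have hBi : ∀ i, ‖u' i‖ ≤ B := by
    intro i
    have h1 := Finset.single_le_sum (f := fun i => ‖u' i‖) (fun i _ => norm_nonneg _)
      (Finset.mem_univ i)
    rw [hB]
    linarith
  set Mm : ℕ → ℝ := fun m => 2 * Real.pi * B * m + σ m + 2 with hMm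
  have hM1 : ∀ m, 1 ≤ Mm m := by
    intro m
    have h1 : (0:ℝ) ≤ 2 * Real.pi * B * m := by positivity
    have h2 := hσ0 m
    rw [hMm]
    dsimp only
    linarith
  have hqbound : ∀ m i, ‖q m i‖ ≤ 2 * Real.pi * B * m := by
    intro m i
    have h1 : ‖(2 * (Real.pi : ℂ) * Complex.I * (m:ℕ))‖ = 2 * Real.pi * m := by
      rw [norm_mul, norm_mul, norm_mul]
      rw [Complex.norm_I, Complex.norm_natCast]
      simp [Complex.norm_real, Real.norm_eq_abs, abs_of_nonneg Real.pi_nonneg]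
    have h2 : ‖q m i‖ ≤ (2 * Real.pi * m) * B := by
      rw [show q m i = (2 * (Real.pi : ℂ) * Complex.I * m) * u' i from rfl, norm_mul, h1]
      exact mul_le_mul_of_nonneg_left (hBi i) (by positivity)
    calc ‖q m i‖ ≤ (2 * Real.pi * m) * B := h2
      _ = 2 * Real.pi * B * m := by ring
  -- polynomial Lipschitz constants
  choose C hC0 hCdeg hCbound using fun j => eval_diff_bound (P j)
  have hsmall : ∀ j, Tendsto
      (fun m : ℕ => C j * Mm m ^ (d j - 1) * (1 + σ m) / ‖a j m‖) atTop (nhds 0) := by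
    intro j
    rcases Nat.eq_zero_or_pos (d j) with hdj | hdj
    · have hCj : C j = 0 := hCdeg j hdj
      simp only [hCj, zero_mul, zero_div]
      exact tendsto_const_nhds
    · have hMoverm : Tendsto (fun m : ℕ => Mm m / (m:ℝ)) atTop (nhds (2 * Real.pi * B)) := by
        have h2m : Tendsto (fun m : ℕ => 2/(m:ℝ)) atTop (nhds 0) :=
          tendsto_const_div_atTop_nhds_zero_nat 2
        have hsum := (tendsto_const_nhds :
          Tendsto (fun _ : ℕ => 2 * Real.pi * B) atTop (nhds (2 * Real.pi * B))).add
          (hσ.add h2m)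
        rw [add_zero, add_zero] at hsum
        refine hsum.congr' ?_
        filter_upwards [eventually_ge_atTop 1] with m hm
        have hm0 : ((m:ℝ)) ≠ 0 := by
          have : (0:ℝ) < (m:ℝ) := by exact_mod_cast hm
          exact ne_of_gt this
        rw [hMm]
        dsimp only
        field_simp
        ring
      have hpowlim : Tendsto (fun m : ℕ => C j * (Mm m/(m:ℝ)) ^ (d j - 1)) atTop
          (nhds (C j * (2 * Real.pi * B) ^ (d j - 1))) := (hMoverm.pow _).const_mul _
      have hmid : Tendsto (fun m : ℕ => (1 + σ m)/(m:ℝ)) atTop (nhds 0) := by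
        have h1m : Tendsto (fun m : ℕ => 1/(m:ℝ)) atTop (nhds 0) :=
          tendsto_const_div_atTop_nhds_zero_nat 1
        have h2 := h1m.add hσ
        rw [add_zero] at h2
        refine h2.congr fun m => ?_
        rw [← add_div]
      have hinva : Tendsto (fun m : ℕ => (m:ℝ) ^ (d j)/‖a j m‖) atTop
          (nhds ‖cc j‖⁻¹) := by
        have h1 := (hlimn j).inv₀ (norm_ne_zero_iff.2 (hcc j))
        refine h1.congr fun m => ?_
        rw [inv_div]
      have hprod := (hpowlim.mul hmid).mul hinva
      rw [mul_zero, zero_mul] at hprod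
      refine hprod.congr' ?_
      filter_upwards [hlow j, eventually_ge_atTop 1] with m h1 h2
      have hm0 : (0:ℝ) < (m:ℝ) := by exact_mod_cast h2
      have hap : 0 < ‖a j m‖ :=
        lt_of_lt_of_le (mul_pos (hccpos j) (pow_pos hm0 _)) h1
      have hsplit : (m:ℝ) ^ (d j) = (m:ℝ) ^ (d j - 1) * (m:ℝ) := by
        rw [← pow_succ]; congr 1; omega
      rw [hsplit]
      field_simp
      rw [div_pow]
      field_simp
  -- choose a good m
  have hgood : ∀ᶠ m : ℕ in atTop, (1 ≤ m ∧ ∀ j, 0 < ‖a j m‖) ∧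
      ∀ j, C j * Mm m ^ (d j - 1) * (1 + σ m) ≤ (1/100) * ‖a j m‖ := by
    refine ((eventually_ge_atTop 1).and hane).and ?_
    rw [Filter.eventually_all]
    intro j
    filter_upwards [(hsmall j).eventually (eventually_lt_nhds (by norm_num : (0:ℝ) < 1/100)),
      hane] with m h1 h2
    have h3 := h2 j
    have h4 := (div_lt_iff₀ h3).1 h1
    linarith
  obtain ⟨m, ⟨hm1, hapos⟩, hmsmall⟩ := hgood.exists
  have hane' : ∀ j, a j m ≠ 0 := fun j => norm_pos_iff.1 (hapos j)
  -- Newton iteration setup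
  set p : Fin n → ℂ := fun j => q m j + s m j with hp
  set F : (Fin n → ℂ) → (Fin n → ℂ) :=
    fun x j => Complex.exp (x j) - eval (fun i => p i + x i) (P j) / a j m with hF
  have hsbound : ∀ i, ‖s m i‖ ≤ σ m := by
    intro i
    exact Finset.single_le_sum (f := fun i => ‖s m i‖) (fun i _ => norm_nonneg _)
      (Finset.mem_univ i)
  have hcoord : ∀ x : Fin n → ℂ, ‖x‖ ≤ 1 → ∀ i, ‖p i + x i‖ ≤ Mm m := by
    intro x hx i
    have h1 := hqbound m i
    have h2 := hsbound i
    have h3 : ‖x i‖ ≤ 1 := (norm_le_pi_norm x i).trans hx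
    calc ‖p i + x i‖ ≤ ‖q m i‖ + ‖s m i‖ + ‖x i‖ := by
          rw [show p i + x i = q m i + s m i + x i from rfl]
          exact norm_add₃_le
      _ ≤ 2 * Real.pi * B * m + σ m + 2 := by linarith
      _ = Mm m := rfl
  have hCM : ∀ j, C j * Mm m ^ (d j - 1) ≤ (1/100) * ‖a j m‖ := by
    intro j
    have h1 := hmsmall j
    have h2 : (0:ℝ) ≤ C j * Mm m ^ (d j - 1) := by
      have := hC0 j
      have := hM1 m
      positivity
    nlinarith [hσ0 m]
  have hpolydiff : ∀ x y : Fin n → ℂ, ‖x‖ ≤ 1 → ‖y‖ ≤ 1 → ∀ j,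
      ‖eval (fun i => p i + x i) (P j) - eval (fun i => p i + y i) (P j)‖
        ≤ C j * Mm m ^ (d j - 1) * ‖x - y‖ := by
    intro x y hx hy j
    have h1 := hCbound j (fun i => p i + x i) (fun i => p i + y i) (Mm m) (hM1 m)
      (hcoord x hx) (hcoord y hy)
    have heq : (fun i => p i + x i) - (fun i => p i + y i) = x - y := by
      funext i
      simp only [Pi.sub_apply]
      ring
    rwa [heq] at h1
  have happrox : ApproximatesLinearOn F
      ((ContinuousLinearEquiv.refl ℂ (Fin n → ℂ)) :
        (Fin n → ℂ) →L[ℂ] (Fin n → ℂ)) (closedBall 0 (1/8)) (1/2 : ℝ≥0) := by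
    intro x hx y hy
    rw [mem_closedBall_zero_iff] at hx hy
    have hx1 : ‖x‖ ≤ 1 := hx.trans (by norm_num)
    have hy1 : ‖y‖ ≤ 1 := hy.trans (by norm_num)
    have hcoe : (((1/2 : ℝ≥0) : ℝ)) = 1/2 := by norm_num
    rw [show ((ContinuousLinearEquiv.refl ℂ (Fin n → ℂ)) :
        (Fin n → ℂ) →L[ℂ] (Fin n → ℂ)) (x - y) = x - y from rfl, hcoe]
    rw [pi_norm_le_iff_of_nonneg (by positivity)]
    intro j
    have hcomp : (F x - F y - (x - y)) j =
        (Complex.exp (x j) - Complex.exp (y j) - (x j - y j))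
          - (eval (fun i => p i + x i) (P j) - eval (fun i => p i + y i) (P j)) / a j m := by
      simp only [Pi.sub_apply, hF]
      rw [_root_.sub_div]
      ring
    rw [hcomp]
    have hexpt0 := exp_approx ((norm_le_pi_norm x j).trans hx) ((norm_le_pi_norm y j).trans hy)
    have hxyj : ‖x j - y j‖ ≤ ‖x - y‖ := by
      have h5 := norm_le_pi_norm (x - y) j
      simpa using h5
    have hexpt : ‖Complex.exp (x j) - Complex.exp (y j) - (x j - y j)‖ ≤ (1/4) * ‖x - y‖ :=
      hexpt0.trans (mul_le_mul_of_nonneg_left hxyj (by norm_num))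
    have hpolyt : ‖(eval (fun i => p i + x i) (P j) - eval (fun i => p i + y i) (P j)) / a j m‖
        ≤ (1/100) * ‖x - y‖ := by
      rw [norm_div]
      rw [div_le_iff₀ (hapos j)]
      calc ‖eval (fun i => p i + x i) (P j) - eval (fun i => p i + y i) (P j)‖
          ≤ C j * Mm m ^ (d j - 1) * ‖x - y‖ := hpolydiff x y hx1 hy1 j
        _ ≤ ((1/100) * ‖a j m‖) * ‖x - y‖ :=
            mul_le_mul_of_nonneg_right (hCM j) (norm_nonneg _)
        _ = 1/100 * ‖x - y‖ * ‖a j m‖ := by ring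
    calc ‖(Complex.exp (x j) - Complex.exp (y j) - (x j - y j))
          - (eval (fun i => p i + x i) (P j) - eval (fun i => p i + y i) (P j)) / a j m‖
        ≤ ‖Complex.exp (x j) - Complex.exp (y j) - (x j - y j)‖
          + ‖(eval (fun i => p i + x i) (P j) - eval (fun i => p i + y i) (P j)) / a j m‖ :=
          norm_sub_le _ _
      _ ≤ (1/4) * ‖x - y‖ + (1/100) * ‖x - y‖ := add_le_add hexpt hpolyt
      _ ≤ 1/2 * ‖x - y‖ := by nlinarith [norm_nonneg (x - y)]
  have hF0 : ‖F 0‖ ≤ 1/16 := by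
    rw [pi_norm_le_iff_of_nonneg (by norm_num)]
    intro j
    have hzero : ‖(0 : Fin n → ℂ)‖ ≤ 1 := by simp
    have hdiff : ‖a j m - eval (fun i => p i + (0 : Fin n → ℂ) i) (P j)‖
        ≤ (1/100) * ‖a j m‖ := by
      have h1 := hCbound j (q m) (fun i => p i + (0 : Fin n → ℂ) i) (Mm m) (hM1 m)
        (fun i => le_trans (hqbound m i) (by rw [hMm]; dsimp only; nlinarith [hσ0 m]))
        (hcoord 0 hzero)
      have h2 : ‖q m - (fun i => p i + (0 : Fin n → ℂ) i)‖ ≤ σ m := by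
        rw [pi_norm_le_iff_of_nonneg (hσ0 m)]
        intro i
        have h6 : q m i - (p i + (0 : Fin n → ℂ) i) = -(s m i) := by
          rw [show p i = q m i + s m i from rfl]
          simp
        rw [Pi.sub_apply, h6, norm_neg]
        exact hsbound i
      calc ‖a j m - eval (fun i => p i + (0 : Fin n → ℂ) i) (P j)‖
          ≤ C j * Mm m ^ (d j - 1) * ‖q m - (fun i => p i + (0 : Fin n → ℂ) i)‖ := h1
        _ ≤ C j * Mm m ^ (d j - 1) * (1 + σ m) := by
            refine mul_le_mul_of_nonneg_left ?_ ?_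
            · linarith [h2]
            · have := hC0 j; have := hM1 m; positivity
        _ ≤ (1/100) * ‖a j m‖ := hmsmall j
    have hF0j : F 0 j = (a j m - eval (fun i => p i + (0 : Fin n → ℂ) i) (P j)) / a j m := by
      simp only [hF, Pi.zero_apply, Complex.exp_zero]
      rw [_root_.sub_div, div_self (hane' j)]
    rw [hF0j, norm_div, div_le_iff₀ (hapos j)]
    calc ‖a j m - eval (fun i => p i + (0 : Fin n → ℂ) i) (P j)‖ ≤ (1/100) * ‖a j m‖ := hdiff
      _ ≤ 1/16 * ‖a j m‖ := by nlinarith [hapos j]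
  -- surjectivity
  have hnn : ((ContinuousLinearEquiv.refl ℂ (Fin n → ℂ)).toNonlinearRightInverse.nnnorm : ℝ)
      = 1 := by
    have h1 : (ContinuousLinearEquiv.refl ℂ (Fin n → ℂ)).toNonlinearRightInverse.nnnorm
        = ‖ContinuousLinearMap.id ℂ (Fin n → ℂ)‖₊ := rfl
    rw [h1, ContinuousLinearMap.nnnorm_id]
    norm_num
  have hsurj := happrox.surjOn_closedBall_of_nonlinearRightInverse
    (ContinuousLinearEquiv.refl ℂ (Fin n → ℂ)).toNonlinearRightInverse
    (by norm_num : (0:ℝ) ≤ 1/8) Set.Subset.rfl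
  rw [hnn] at hsurj
  have h0mem : (0 : Fin n → ℂ) ∈ closedBall (F 0) (((1:ℝ)⁻¹ - ((1/2 : ℝ≥0) : ℝ)) * (1/8)) := by
    rw [mem_closedBall, dist_zero_left]
    have hcoe : ((1:ℝ)⁻¹ - ((1/2 : ℝ≥0) : ℝ)) * (1/8) = 1/16 := by norm_num
    rw [hcoe]
    exact hF0
  obtain ⟨x, hxball, hFx⟩ := hsurj h0mem
  -- conclusion
  refine ⟨fun j => p j + x j, fun j => ?_⟩
  have hFxj : Complex.exp (x j) = eval (fun i => p i + x i) (P j) / a j m := by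
    have h1 := congrFun hFx j
    simp only [hF, Pi.zero_apply] at h1
    exact sub_eq_zero.1 h1
  have hq1 : Complex.exp (q m j) = 1 := by
    have hqeq : q m j = ((m * u j : ℤ) : ℂ) * (2 * (Real.pi : ℂ) * Complex.I) := by
      show (2 * (Real.pi : ℂ) * Complex.I * m) * u' j = _
      push_cast
      ring
    rw [hqeq]
    exact Complex.exp_int_mul_two_pi_mul_I _
  have hsa : Complex.exp (s m j) = a j m := Complex.exp_log (hane' j)
  show Complex.exp (p j + x j) = eval (fun i => p i + x i) (P j)
  have hsplit2 : p j + x j = q m j + (s m j + x j) := by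
    show q m j + s m j + x j = _
    ring
  rw [hsplit2, Complex.exp_add, Complex.exp_add, hq1, hsa, hFxj, one_mul]
  rw [mul_comm, div_mul_cancel₀ _ (hane' j)]
end
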